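/- Let w₁ and w₂ be primitive, unbordered, non-equivalent strings (no rotation of w₁ equals w₂), let x₁ be a prefix of w₁^∞ and x₂ a prefix of w₂^∞, and let α₂ be an integer with 0 < α₂ ≤ |w₂|/2 such that w₂[1..α₂] occurs as a prefix of exactly one rotation of w₂. Then the overlap of x₁ and x₂ (the longest suffix of x₁ that is a prefix of x₂) has length strictly less than |w₁| + α₂. -/
import Mathlib

def Primitive {α : Type*} (w : List α) : Prop :=
  ∀ (v : List α) (k : ℕ), 2 ≤ k → w ≠ (List.replicate k v).flatten

def Unbordered {α : Type*} (s : List α) : Prop :=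
  ∀ b : List α, b ≠ [] → b ≠ s → b <+: s → ¬ b <:+ s

/-- `x` is a prefix of the infinite string `w^∞`. -/
def IsPrefixOfInfPow {α : Type*} (x w : List α) : Prop :=
  ∃ m : ℕ, x <+: (List.replicate m w).flatten

section Aux
variable {α : Type*}

private lemma repFlatten_succ (w : List α) (k : ℕ) :
    (List.replicate (k + 1) w).flatten = w ++ (List.replicate k w).flatten := by
  rw [List.replicate_succ, List.flatten_cons]

private lemma repFlatten_add (w : List α) (a b : ℕ) :
    (List.replicate (a + b) w).flatten
      = (List.replicate a w).flatten ++ (List.replicate b w).flatten := by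
  rw [List.replicate_add, List.flatten_append]

private lemma repFlatten_mono (w : List α) {a b : ℕ} (h : a ≤ b) :
    (List.replicate a w).flatten <+: (List.replicate b w).flatten :=
  ⟨(List.replicate (b - a) w).flatten, by rw [← repFlatten_add, Nat.add_sub_cancel' h]⟩

private lemma length_repFlatten (w : List α) (m : ℕ) :
    ((List.replicate m w).flatten).length = m * w.length := by simp

/-- conjugation of powers -/
private lemma conjRepFlatten (d t : List α) : ∀ k : ℕ,
    (List.replicate (k + 1) (d ++ t)).flatten
      = d ++ (List.replicate k (t ++ d)).flatten ++ t
  | 0 => by simp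
  | k + 1 => by
    rw [repFlatten_succ, conjRepFlatten d t k, repFlatten_succ]
    simp [List.append_assoc]

private lemma drop_mul_repFlatten (w : List α) : ∀ (q m : ℕ),
    ((List.replicate m w).flatten).drop (q * w.length)
      = (List.replicate (m - q) w).flatten
  | 0, m => by simp
  | q + 1, m => by
    cases m with
    | zero => simp
    | succ m =>
      have h1 : (q + 1) * w.length = w.length + q * w.length := by ring
      have h2 : m + 1 - (q + 1) = m - q := by omega
      rw [h1, ← List.drop_drop, repFlatten_succ, List.drop_left,
        drop_mul_repFlatten w q m, h2]

private lemma rotate_one_repFlatten (v : List α) (k : ℕ) :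
    ((List.replicate k v).flatten).rotate 1
      = (List.replicate k (v.rotate 1)).flatten := by
  cases v with
  | nil => simp
  | cons a v' =>
    cases k with
    | zero => simp
    | succ k =>
      have h1 : (a :: v').rotate 1 = v' ++ [a] := by
        have := List.rotate_cons_succ v' a 0
        simpa using this
      rw [h1, repFlatten_succ, conjRepFlatten v' [a] k]
      have h2 : (a :: (v' ++ (List.replicate k (a :: v')).flatten)).rotate 1
          = (v' ++ (List.replicate k (a :: v')).flatten) ++ [a] := by
        have := List.rotate_cons_succ (v' ++ (List.replicate k (a :: v')).flatten) a 0
        simpa using this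
      simp only [List.cons_append]
      rw [h2]
      simp [List.append_assoc]

private lemma rotate_repFlatten (v : List α) (k : ℕ) : ∀ s : ℕ,
    ((List.replicate k v).flatten).rotate s
      = (List.replicate k (v.rotate s)).flatten
  | 0 => by simp
  | s + 1 => by
    rw [← List.rotate_rotate, rotate_repFlatten v k s, rotate_one_repFlatten,
        List.rotate_rotate]

private lemma drop_repFlatten_prefix (w : List α) (hw : w ≠ []) (t m : ℕ) :
    ((List.replicate m w).flatten).drop t
      <+: (List.replicate m (w.rotate (t % w.length))).flatten := by
  have hn : 0 < w.length := List.length_pos_iff.2 hw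
  set n := w.length with hn'
  set q := t / n with hq
  set r := t % n with hr
  have hrn : r < n := Nat.mod_lt _ hn
  rcases le_or_gt m q with h | h
  · have hlen : ((List.replicate m w).flatten).length ≤ t := by
      rw [length_repFlatten]
      calc m * n ≤ q * n := Nat.mul_le_mul_right _ h
        _ ≤ t := Nat.div_mul_le_self t n
    rw [List.drop_eq_nil_of_le hlen]
    exact List.nil_prefix
  · have ht : t = q * n + r := (Nat.div_add_mod' t n).symm
    clear_value q r
    rw [ht, ← List.drop_drop, drop_mul_repFlatten]
    obtain ⟨s, hs⟩ : ∃ s, m - q = s + 1 := ⟨m - q - 1, by omega⟩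
    rw [hs, repFlatten_succ, List.drop_append_of_le_length hrn.le]
    obtain ⟨m', hm'⟩ : ∃ m', m = m' + 1 := ⟨m - 1, by omega⟩
    rw [List.rotate_eq_drop_append_take hrn.le, hm', conjRepFlatten,
        List.take_append_drop]
    have hsm' : s ≤ m' := by
      have h1 : s + 1 ≤ m' + 1 := by rw [← hm', ← hs]; exact Nat.sub_le m q
      omega
    refine ⟨(List.replicate (m' - s) w).flatten ++ w.take r, ?_⟩
    rw [List.append_assoc, List.append_assoc, ← List.append_assoc (List.replicate s w).flatten,
        ← repFlatten_add, Nat.add_sub_cancel' hsm']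

private lemma prefix_drop' {a b : List α} (h : a <+: b) (t : ℕ) :
    a.drop t <+: b.drop t := by
  obtain ⟨z, rfl⟩ := h
  rcases le_or_gt t a.length with ht | ht
  · rw [List.drop_append_of_le_length ht]
    exact ⟨z, rfl⟩
  · rw [List.drop_eq_nil_of_le ht.le]
    exact List.nil_prefix

private lemma take_eq_take_of_prefix {a b c : List α} {k : ℕ} (ha : a <+: c) (hb : b <+: c)
    (hka : k ≤ a.length) (hkb : k ≤ b.length) : a.take k = b.take k := by
  obtain ⟨z, rfl⟩ := ha
  obtain ⟨y, hy⟩ := hb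
  have : b.take k = (b ++ y).take k := (List.take_append_of_le_length hkb).symm
  rw [this, hy, List.take_append_of_le_length hka]

private lemma suffix_prefix_repFlatten {x ov w : List α} (hw : w ≠ []) {m : ℕ}
    (hx : x <+: (List.replicate m w).flatten) (hov : ov <:+ x) :
    ∃ r < w.length, ov <+: (List.replicate m (w.rotate r)).flatten := by
  obtain ⟨z, hz⟩ := hx
  obtain ⟨y, hy⟩ := hov
  refine ⟨y.length % w.length, Nat.mod_lt _ (List.length_pos_iff.2 hw), ?_⟩
  have h1 : ov <+: ((List.replicate m w).flatten).drop y.length := by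
    rw [← hz, ← hy, List.append_assoc, List.drop_left]
    exact ⟨z, rfl⟩
  exact h1.trans (drop_repFlatten_prefix w hw _ m)

end Aux

/-- Breslauer-type overlap bound: if `w₁, w₂` are primitive, unbordered and
non-equivalent, `xᵢ` is a prefix of `wᵢ^∞`, and `0 < α₂ ≤ |w₂|/2` is such that
the prefix `w₂[1..α₂]` occurs as a prefix of exactly one rotation of `w₂`
(namely `w₂` itself), then the overlap of `x₁` and `x₂` (the longest suffix of
`x₁` that is a prefix of `x₂`) has length `< |w₁| + α₂`. -/
theorem overlap_lt_len_add_alpha {α : Type*} (w₁ w₂ x₁ x₂ ov : List α) (α₂ : ℕ)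
    (hp₁ : Primitive w₁) (hp₂ : Primitive w₂)
    (hu₁ : Unbordered w₁) (hu₂ : Unbordered w₂)
    (hne : ¬ w₁.IsRotated w₂)
    (hx₁ : IsPrefixOfInfPow x₁ w₁) (hx₂ : IsPrefixOfInfPow x₂ w₂)
    (hα₂pos : 0 < α₂) (hα₂le : 2 * α₂ ≤ w₂.length)
    (huniq : ∀ z, w₂.IsRotated z → w₂.take α₂ <+: z → z = w₂)
    (hov₁ : ov <:+ x₁) (hov₂ : ov <+: x₂)
    (hovmax : ∀ u : List α, u <:+ x₁ → u <+: x₂ → u.length ≤ ov.length) :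
    ov.length < w₁.length + α₂ := by
  by_contra hcon
  push_neg at hcon
  obtain ⟨m₁, hx₁⟩ := hx₁
  obtain ⟨m₂, hx₂⟩ := hx₂
  have hn₂ : 0 < w₂.length := by omega
  have hw₂ : w₂ ≠ [] := List.length_pos_iff.1 hn₂
  have hovpos : 0 < ov.length := by omega
  have hw₁ : w₁ ≠ [] := by
    intro h
    subst h
    have hnil : (List.replicate m₁ ([] : List α)).flatten = [] := by simp
    rw [hnil] at hx₁
    have hx₁' : x₁ = [] := List.prefix_nil.mp hx₁
    subst hx₁'
    have : ov = [] := List.suffix_nil.mp hov₁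
    simp [this] at hovpos
  have hn₁ : 0 < w₁.length := List.length_pos_iff.2 hw₁
  -- ov is a prefix of ρ^m₁ for some rotation ρ of w₁
  obtain ⟨r₁, hr₁, hovρ⟩ := suffix_prefix_repFlatten hw₁ hx₁ hov₁
  set ρ := w₁.rotate r₁ with hρdef
  have hρlen : ρ.length = w₁.length := List.length_rotate _ _
  have hρne : ρ ≠ [] := by
    intro h; rw [h] at hρlen; simp at hρlen; omega
  have hovw₂ : ov <+: (List.replicate m₂ w₂).flatten := hov₂.trans hx₂
  have hα₂n₂ : α₂ ≤ w₂.length := by omega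
  have hlov₂ : ov.length ≤ m₂ * w₂.length := by
    have := hovw₂.length_le; rwa [length_repFlatten] at this
  have hlov₁ : ov.length ≤ m₁ * w₁.length := by
    have := hovρ.length_le; rwa [length_repFlatten, hρlen] at this
  have hm₂ : 1 ≤ m₂ := by
    rcases Nat.eq_zero_or_pos m₂ with h | h
    · rw [h] at hlov₂; omega
    · exact h
  have hm₁ : 1 ≤ m₁ := by
    rcases Nat.eq_zero_or_pos m₁ with h | h
    · rw [h] at hlov₁; omega
    · exact h
  -- ov.drop |w₁| is also a prefix of ρ^m₁
  have h2 : ov.drop w₁.length <+: (List.replicate m₁ ρ).flatten := by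
    refine (prefix_drop' hovρ w₁.length).trans ?_
    have := drop_repFlatten_prefix ρ hρne w₁.length m₁
    rwa [hρlen, Nat.mod_self, List.rotate_zero] at this
  have hdroplen : α₂ ≤ (ov.drop w₁.length).length := by
    rw [List.length_drop]; omega
  -- key periodicity: ov.take α₂ = (ov.drop |w₁|).take α₂
  have key : ov.take α₂ = (ov.drop w₁.length).take α₂ :=
    take_eq_take_of_prefix hovρ h2 (by omega) hdroplen
  -- ov.take α₂ = w₂.take α₂
  have hw₂pref : w₂ <+: (List.replicate m₂ w₂).flatten := by
    have := repFlatten_mono w₂ hm₂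
    simpa using this
  have hovtake : ov.take α₂ = w₂.take α₂ :=
    take_eq_take_of_prefix hovw₂ hw₂pref (by omega) hα₂n₂
  -- ov.drop |w₁| is a prefix of (w₂.rotate r₂)^m₂ where r₂ = |w₁| % |w₂|
  set r₂ := w₁.length % w₂.length with hr₂def
  have h4 : ov.drop w₁.length <+: (List.replicate m₂ (w₂.rotate r₂)).flatten :=
    (prefix_drop' hovw₂ w₁.length).trans (drop_repFlatten_prefix w₂ hw₂ w₁.length m₂)
  -- w₂.take α₂ is a prefix of w₂.rotate r₂
  have hρ₂len : (w₂.rotate r₂).length = w₂.length := List.length_rotate _ _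
  have h5 : w₂.take α₂ <+: w₂.rotate r₂ := by
    have hta : (ov.drop w₁.length).take α₂ <+: (List.replicate m₂ (w₂.rotate r₂)).flatten :=
      (List.take_prefix _ _).trans h4
    have hrb : w₂.rotate r₂ <+: (List.replicate m₂ (w₂.rotate r₂)).flatten := by
      have := repFlatten_mono (w₂.rotate r₂) hm₂
      simpa using this
    have heq : ((ov.drop w₁.length).take α₂).take α₂ = (w₂.rotate r₂).take α₂ :=
      take_eq_take_of_prefix hta hrb
        (by rw [List.length_take]; exact le_min le_rfl hdroplen)
        (by rw [hρ₂len]; exact hα₂n₂)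
    rw [List.take_take, min_self] at heq
    rw [← key, hovtake] at heq
    rw [heq]
    exact List.take_prefix _ _
  -- uniqueness forces r₂ = 0
  have hρ₂eq : w₂.rotate r₂ = w₂ := huniq _ ⟨r₂, rfl⟩ h5
  have hr₂lt : r₂ < w₂.length := Nat.mod_lt _ hn₂
  have hr₂0 : r₂ = 0 := by
    by_contra h
    have heq : w₂.drop r₂ ++ w₂.take r₂ = w₂ := by
      rw [← List.rotate_eq_drop_append_take hr₂lt.le]; exact hρ₂eq
    refine hu₂ (w₂.take r₂) ?_ ?_ (List.take_prefix _ _) ⟨w₂.drop r₂, heq⟩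
    · intro hnil
      have hlen := congrArg List.length hnil
      rw [List.length_take] at hlen
      simp only [List.length_nil] at hlen
      omega
    · intro hself
      have hlen := congrArg List.length hself
      rw [List.length_take] at hlen
      omega
  have hdvd : w₂.length ∣ w₁.length := Nat.dvd_of_mod_eq_zero hr₂0
  set k := w₁.length / w₂.length with hkdef
  have hkn : k * w₂.length = w₁.length := Nat.div_mul_cancel hdvd
  have hk1 : 1 ≤ k := by
    rcases Nat.eq_zero_or_pos k with h | h
    · rw [h] at hkn; simp at hkn; omega
    · exact h
  have hkm₂ : k ≤ m₂ := by
    have h1 : k * w₂.length ≤ m₂ * w₂.length := by omega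
    exact Nat.le_of_mul_le_mul_right h1 hn₂
  -- ρ = w₂^k
  have hρ_eq : ρ = (List.replicate k w₂).flatten := by
    have hρpref : ρ <+: (List.replicate m₁ ρ).flatten := by
      have := repFlatten_mono ρ hm₁
      simpa using this
    have h6 : ρ.take w₁.length = ov.take w₁.length :=
      take_eq_take_of_prefix hρpref hovρ (by omega) (by omega)
    have h7 : ((List.replicate k w₂).flatten).take w₁.length = ov.take w₁.length :=
      take_eq_take_of_prefix (repFlatten_mono w₂ hkm₂) hovw₂
        (by rw [length_repFlatten]; omega) (by omega)
    have h8 : ρ.take w₁.length = ρ := List.take_of_length_le (by omega)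
    have h9 : ((List.replicate k w₂).flatten).take w₁.length
        = (List.replicate k w₂).flatten :=
      List.take_of_length_le (by rw [length_repFlatten]; omega)
    rw [← h8, h6, ← h7, h9]
  -- finish
  rcases eq_or_lt_of_le hk1 with hk | hk
  · -- k = 1 : ρ = w₂, so w₁ is a rotation of w₂
    have hρw₂ : ρ = w₂ := by
      rw [hρ_eq, ← hk]
      simp
    exact hne ⟨r₁, hρw₂⟩
  · -- k ≥ 2 : w₁ is a power, contradicting primitivity
    have hw₁eq : w₁ = ρ.rotate (w₁.length - r₁) := by
      rw [hρdef, List.rotate_rotate]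
      have h10 : r₁ + (w₁.length - r₁) = w₁.length := by omega
      rw [h10, List.rotate_length]
    rw [hρ_eq, rotate_repFlatten] at hw₁eq
    exact hp₁ (w₂.rotate (w₁.length - r₁)) k hk hw₁eq
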